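/- Let h be Exp(1), independent of I ≥ 0, and suppose E[e^{−uI}] = exp(−c u^{2/α}) for all u > 0 with constants c > 0, α > 2, and let noise σ² ≥ 0. Let R ≥ 0 have density f(x) = 2πλ x e^{−πλx²} independent of (h, I). Then E[log₂(1 + h R^{−α}/(I + σ²))] = ∫_0^∞ ∫_0^∞ πλ exp(−(2^t − 1) σ² z^{α/2} − c (2^t −1)^{2/α} z − πλ z) dz dt. -/

import Mathlib

open Real MeasureTheory ProbabilityTheory Set

set_option maxHeartbeats 1000000

section Aux
lemma gInt {c α lam σ2 u : ℝ} (hc : 0 ≤ c) (hα : 0 ≤ α) (hlam : 0 < lam) (hσ : 0 ≤ σ2)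
    (hu : 0 ≤ u) : IntegrableOn (fun z : ℝ =>
      π * lam * Real.exp (-(u * σ2 * z ^ (α/2)) - c * u ^ (2/α) * z - π * lam * z))
      (Set.Ioi 0) := by
  have hplam : 0 < π * lam := by positivity
  apply Integrable.mono' (((exp_neg_integrableOn_Ioi 0 hplam)).const_mul (π*lam))
  · apply Continuous.aestronglyMeasurable
    fun_prop (disch := positivity)
  · filter_upwards [self_mem_ae_restrict measurableSet_Ioi] with z hz
    rw [Real.norm_eq_abs, abs_of_nonneg (by positivity)]
    apply mul_le_mul_of_nonneg_left _ hplam.le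
    apply Real.exp_le_exp.mpr
    have h1 : 0 ≤ u * σ2 * z ^ (α/2) := by
      have : (0:ℝ) < z := hz
      positivity
    have h2 : 0 ≤ c * u ^ (2/α) * z := by
      have : (0:ℝ) < z := hz
      positivity
    linarith

lemma gSubst {c α lam σ2 u : ℝ} :
    (∫ x in Ioi (0:ℝ), (2*π*lam*x*Real.exp (-(π*lam*x^2))) *
      (Real.exp (-(u*σ2*x^α)) * Real.exp (-(c*(u^(2/α)*x^2))))) =
    ∫ z in Ioi (0:ℝ),
      π * lam * Real.exp (-(u * σ2 * z ^ (α/2)) - c * u ^ (2/α) * z - π * lam * z) := by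
  rw [← integral_comp_rpow_Ioi (fun z => π * lam *
      Real.exp (-(u * σ2 * z ^ (α/2)) - c * u ^ (2/α) * z - π * lam * z))
      (p := 2) two_ne_zero]
  apply setIntegral_congr_fun measurableSet_Ioi
  intro x hx
  have hx0 : (0:ℝ) < x := hx
  have h2 : x ^ (2:ℝ) = x ^ 2 := by
    rw [show (2:ℝ) = ((2:ℕ):ℝ) by norm_num, Real.rpow_natCast]
  have h1 : x ^ ((2:ℝ) - 1) = x := by norm_num
  have hpow : (x ^ (2:ℝ)) ^ (α/2) = x ^ α := by
    rw [← Real.rpow_mul hx0.le]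
    congr 1
    ring
  simp only [smul_eq_mul, h2, h1]
  rw [← h2, hpow, h2]
  rw [show -(u * σ2 * x ^ α) - c * u ^ (2/α) * x ^ 2 - π * lam * x ^ 2
    = -(π*lam*x^2) + (-(u*σ2*x^α) + -(c*(u^(2/α)*x^2))) by ring,
    Real.exp_add, Real.exp_add]
  ring_nf

lemma phiInt {c α lam σ2 u : ℝ} (hc : 0 ≤ c) (hα : 0 ≤ α) (hlam : 0 < lam) (hσ : 0 ≤ σ2)
    (hu : 0 ≤ u) : IntegrableOn (fun x : ℝ => (2*π*lam*x*Real.exp (-(π*lam*x^2))) *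
      (Real.exp (-(u*σ2*x^α)) * Real.exp (-(c*(u^(2/α)*x^2))))) (Set.Ioi 0) := by
  have hplam : 0 < π * lam := by positivity
  have hbase : Integrable (fun x : ℝ => (2*π*lam) * (x * Real.exp (-(π*lam) * x^2))) :=
    (integrable_mul_exp_neg_mul_sq hplam).const_mul _
  apply Integrable.mono' hbase.integrableOn
  · apply Continuous.aestronglyMeasurable
    fun_prop (disch := positivity)
  · filter_upwards [self_mem_ae_restrict measurableSet_Ioi] with x hx
    have hx0 : (0:ℝ) < x := hx
    rw [Real.norm_eq_abs, abs_of_nonneg (by positivity)]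
    have e1 : Real.exp (-(u*σ2*x^α)) ≤ 1 := by
      rw [Real.exp_le_one_iff]
      have : 0 ≤ u * σ2 * x ^ α := by positivity
      linarith
    have e2 : Real.exp (-(c*(u^(2/α)*x^2))) ≤ 1 := by
      rw [Real.exp_le_one_iff]
      have : 0 ≤ c * (u^(2/α) * x^2) := by positivity
      linarith
    have hb : 0 ≤ 2*π*lam*x*Real.exp (-(π*lam*x^2)) := by positivity
    calc (2*π*lam*x*Real.exp (-(π*lam*x^2))) * (Real.exp (-(u*σ2*x^α)) * Real.exp (-(c*(u^(2/α)*x^2))))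
        ≤ (2*π*lam*x*Real.exp (-(π*lam*x^2))) * (1 * 1) := by
          apply mul_le_mul_of_nonneg_left _ hb
          exact mul_le_mul e1 e2 (Real.exp_pos _).le zero_le_one
      _ = (2*π*lam) * (x * Real.exp (-(π*lam) * x^2)) := by ring_nf
end Aux

/-- Expected Rayleigh-fading rate: let `h ~ Exp(1)`, interference `I ≥ 0` with Laplace
transform `E[e^{−uI}] = exp(−c u^{2/α})` (`c > 0`, `α > 2`), noise `σ² ≥ 0`, and let the
nearest-BS distance `R` have density `2πλ x e^{−πλx²}` on `(0,∞)` and be independent of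
`(h, I)`.  Then
`E[log₂(1 + h R^{−α}/(I + σ²))]
  = ∫_0^∞ ∫_0^∞ πλ exp(−(2^t−1)σ² z^{α/2} − c(2^t−1)^{2/α} z − πλ z) dz dt`. -/
theorem stmt_16 {Ω : Type*} [MeasurableSpace Ω] (P : Measure Ω) [IsProbabilityMeasure P]
    (h I R : Ω → ℝ) (hh : Measurable h) (hI : Measurable I) (hR : Measurable R)
    (c α lam σ2 : ℝ) (hc : 0 < c) (hα : 2 < α) (hlam : 0 < lam) (hσ : 0 ≤ σ2)
    (hhExp : ∀ a : ℝ, 0 ≤ a → (P {ω | h ω > a}).toReal = Real.exp (-a))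
    (hInn : ∀ ω, 0 ≤ I ω)
    (hLap : ∀ u : ℝ, 0 < u → (∫ ω, Real.exp (-(u * I ω)) ∂P) = Real.exp (-(c * u ^ (2 / α))))
    (hhIindep : IndepFun h I P)
    (hRindep : IndepFun (fun ω => (h ω, I ω)) R P)
    (hRdens : P.map R = volume.withDensity (fun x =>
      ENNReal.ofReal (if 0 < x then 2 * π * lam * x * Real.exp (-(π * lam * x ^ 2)) else 0))) :
    (∫ ω, Real.logb 2 (1 + h ω * (R ω) ^ (-α) / (I ω + σ2)) ∂P) =
      ∫ t in Set.Ioi (0 : ℝ), ∫ z in Set.Ioi (0 : ℝ),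
        π * lam * Real.exp (-(((2 : ℝ) ^ t - 1) * σ2 * z ^ (α / 2))
          - c * ((2 : ℝ) ^ t - 1) ^ (2 / α) * z - π * lam * z) := by
  have hα0 : (0:ℝ) < α := by linarith
  have hαne : α ≠ 0 := hα0.ne'
  -- measurable density
  have hdmeas : Measurable (fun x : ℝ =>
      ENNReal.ofReal (if 0 < x then 2 * π * lam * x * Real.exp (-(π * lam * x ^ 2)) else 0)) := by
    apply Measurable.ennreal_ofReal
    apply Measurable.ite measurableSet_Ioi <;> fun_prop
  -- basic null sets
  have hprob : ∀ a : ℝ, 0 ≤ a → P {ω | a < h ω} = ENNReal.ofReal (Real.exp (-a)) := by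
    intro a ha
    rw [← ENNReal.ofReal_toReal (measure_ne_top P _)]
    congr 1
    exact hhExp a ha
  have nullh : P {ω | h ω ≤ 0} = 0 := by
    have h1 : P {ω | 0 < h ω} = 1 := by
      rw [hprob 0 le_rfl]; simp
    have h2 : P {ω | 0 < h ω}ᶜ = 0 := by
      rw [measure_compl (measurableSet_lt measurable_const hh) (measure_ne_top P _), h1,
        measure_univ]
      simp
    convert h2 using 2
    ext ω; simp [not_lt]
  have nullR : P {ω | R ω ≤ 0} = 0 := by
    have : P {ω | R ω ≤ 0} = P.map R (Iic 0) := by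
      rw [Measure.map_apply hR measurableSet_Iic]; rfl
    rw [this, hRdens, withDensity_apply _ measurableSet_Iic]
    have hz : ∀ᵐ x ∂volume, x ∈ Iic (0:ℝ) →
        ENNReal.ofReal (if 0 < x then 2 * π * lam * x * Real.exp (-(π * lam * x ^ 2)) else 0)
          = 0 := by
      apply Filter.Eventually.of_forall
      intro x hx
      rw [if_neg (not_lt.mpr (hx : x ≤ 0))]
      simp
    rw [setLIntegral_congr_fun_ae measurableSet_Iic hz]
    simp
  have nullI0 : P {ω | I ω = 0} = 0 := by
    have hmeas : MeasurableSet {ω | I ω = 0} := hI (measurableSet_singleton 0)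
    have key : ∀ n : ℕ, (P {ω | I ω = 0}).toReal ≤ Real.exp (-c) ^ (n+1) := by
      intro n
      have hnn : (0:ℝ) ≤ (n:ℝ) + 1 := by positivity
      have hu : (0:ℝ) < ((n:ℝ)+1) ^ (α/2) := by positivity
      have hlap := hLap _ hu
      have hexp : (((n:ℝ)+1) ^ (α/2)) ^ (2/α) = (n:ℝ) + 1 := by
        rw [← Real.rpow_mul hnn]
        rw [show α/2 * (2/α) = 1 by field_simp]
        exact Real.rpow_one _
      rw [hexp] at hlap
      have hpow : Real.exp (-(c * ((n:ℝ)+1))) = Real.exp (-c) ^ (n+1) := by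
        rw [← Real.exp_nat_mul]
        congr 1
        push_cast
        ring
      set u : ℝ := ((n:ℝ)+1) ^ (α/2)
      have hintExp : Integrable (fun ω => Real.exp (-(u * I ω))) P := by
        apply Integrable.mono' (integrable_const (1:ℝ))
        · apply Measurable.aestronglyMeasurable
          fun_prop
        · apply Filter.Eventually.of_forall
          intro ω
          rw [Real.norm_eq_abs, abs_of_nonneg (Real.exp_pos _).le, Real.exp_le_one_iff]
          have := hInn ω
          nlinarith
      have hle : ∀ ω, Set.indicator {ω | I ω = 0} (fun _ => (1:ℝ)) ω
          ≤ Real.exp (-(u * I ω)) := by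
        intro ω
        by_cases hω : I ω = 0
        · rw [Set.indicator_of_mem (by exact hω)]
          simp [hω]
        · rw [Set.indicator_of_notMem (by exact hω)]
          exact (Real.exp_pos _).le
      have hind : ∫ ω, Set.indicator {ω | I ω = 0} (fun _ => (1:ℝ)) ω ∂P
          = (P {ω | I ω = 0}).toReal := by
        rw [integral_indicator_const _ hmeas]
        simp [measureReal_def]
      calc (P {ω | I ω = 0}).toReal
          = ∫ ω, Set.indicator {ω | I ω = 0} (fun _ => (1:ℝ)) ω ∂P := hind.symm
        _ ≤ ∫ ω, Real.exp (-(u * I ω)) ∂P := by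
            exact integral_mono ((integrable_const (1:ℝ)).indicator hmeas) hintExp hle
        _ = Real.exp (-(c * ((n:ℝ)+1))) := hlap
        _ = Real.exp (-c) ^ (n+1) := hpow
    have htend : Filter.Tendsto (fun n : ℕ => Real.exp (-c) ^ (n+1)) Filter.atTop (nhds 0) := by
      have h1 : |Real.exp (-c)| < 1 := by
        rw [abs_of_nonneg (Real.exp_pos _).le]
        rw [Real.exp_lt_one_iff]
        linarith
      exact (tendsto_pow_atTop_nhds_zero_of_abs_lt_one h1).comp (Filter.tendsto_add_atTop_nat 1)
    have hle0 : (P {ω | I ω = 0}).toReal ≤ 0 := ge_of_tendsto' htend key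
    have h0 : (P {ω | I ω = 0}).toReal = 0 := le_antisymm hle0 ENNReal.toReal_nonneg
    rcases (ENNReal.toReal_eq_zero_iff _).mp h0 with h' | h'
    · exact h'
    · exact absurd h' (measure_ne_top P _)
  have nullden : P {ω | I ω + σ2 ≤ 0} = 0 := by
    apply measure_mono_null _ nullI0
    intro ω hω
    have := hInn ω
    simp only [mem_setOf_eq] at *
    linarith
  -- mapped measures
  haveI imh : IsProbabilityMeasure (P.map h) := Measure.isProbabilityMeasure_map hh.aemeasurable
  haveI imI : IsProbabilityMeasure (P.map I) := Measure.isProbabilityMeasure_map hI.aemeasurable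
  haveI imR : IsProbabilityMeasure (P.map R) := Measure.isProbabilityMeasure_map hR.aemeasurable
  have hmapPair : P.map (fun ω => ((h ω, I ω), R ω))
      = ((P.map h).prod (P.map I)).prod (P.map R) := by
    have e1 := (indepFun_iff_map_prod_eq_prod_map_map
      ((hh.prodMk hI).aemeasurable) hR.aemeasurable).mp hRindep
    have e2 := (indepFun_iff_map_prod_eq_prod_map_map
      hh.aemeasurable hI.aemeasurable).mp hhIindep
    rw [e2] at e1
    exact e1
  have aeI : ∀ᵐ b ∂(P.map I), 0 ≤ b := by
    rw [Filter.eventually_iff, mem_ae_iff]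
    have : {b : ℝ | 0 ≤ b}ᶜ = Iio 0 := by ext b; simp [not_le]
    rw [this, Measure.map_apply hI measurableSet_Iio]
    have : I ⁻¹' Iio 0 = ∅ := by
      ext ω; simp [not_lt.mpr (hInn ω)]
    rw [this]
    simp
  have aeR : ∀ᵐ x ∂(P.map R), 0 < x := by
    rw [Filter.eventually_iff, mem_ae_iff]
    have : {x : ℝ | 0 < x}ᶜ = Iic 0 := by ext x; simp [not_lt]
    rw [this, hRdens, withDensity_apply _ measurableSet_Iic]
    have hz : ∀ᵐ x ∂volume, x ∈ Iic (0:ℝ) →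
        ENNReal.ofReal (if 0 < x then 2 * π * lam * x * Real.exp (-(π * lam * x ^ 2)) else 0)
          = 0 := by
      apply Filter.Eventually.of_forall
      intro x hx
      rw [if_neg (not_lt.mpr (hx : x ≤ 0))]
      simp
    rw [setLIntegral_congr_fun_ae measurableSet_Iic hz]
    simp
  have key : ∀ u : ℝ, 0 < u → P {ω | u * (I ω + σ2) * (R ω) ^ α < h ω}
      = ∫⁻ z in Ioi (0:ℝ), ENNReal.ofReal
        (π * lam * Real.exp (-(u * σ2 * z ^ (α/2)) - c * u ^ (2/α) * z - π * lam * z)) := by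
    intro u hu
    have hsm : MeasurableSet {q : (ℝ×ℝ)×ℝ | u * (q.1.2 + σ2) * q.2 ^ α < q.1.1} := by
      apply measurableSet_lt
      · exact (measurable_const.mul ((measurable_snd.comp measurable_fst).add
          measurable_const)).mul (measurable_snd.pow_const α)
      · exact measurable_fst.comp measurable_fst
    have hev : {ω | u * (I ω + σ2) * (R ω) ^ α < h ω}
        = (fun ω => ((h ω, I ω), R ω)) ⁻¹' {q : (ℝ×ℝ)×ℝ | u * (q.1.2 + σ2) * q.2 ^ α < q.1.1} :=
      rfl
    rw [hev, ← Measure.map_apply ((hh.prodMk hI).prodMk hR) hsm, hmapPair,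
      Measure.prod_apply_symm hsm]
    have hx_inner : ∀ x : ℝ, 0 < x →
        ((P.map h).prod (P.map I))
          ((fun p : ℝ×ℝ => (p, x)) ⁻¹' {q : (ℝ×ℝ)×ℝ | u * (q.1.2 + σ2) * q.2 ^ α < q.1.1})
        = ENNReal.ofReal (Real.exp (-(u*σ2*x^α)) * Real.exp (-(c*(u^(2/α)*x^2)))) := by
      intro x hx
      have hxα : (0:ℝ) < x ^ α := Real.rpow_pos_of_pos hx α
      have hsm2 : MeasurableSet {p : ℝ×ℝ | u * (p.2 + σ2) * x ^ α < p.1} :=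
        measurableSet_lt ((measurable_const.mul (measurable_snd.add
          measurable_const)).mul measurable_const) measurable_fst
      have hpre : ((fun p : ℝ×ℝ => (p, x)) ⁻¹' {q : (ℝ×ℝ)×ℝ | u * (q.1.2 + σ2) * q.2 ^ α < q.1.1})
          = {p : ℝ×ℝ | u * (p.2 + σ2) * x ^ α < p.1} := rfl
      rw [hpre, Measure.prod_apply_symm hsm2]
      have hb : ∀ᵐ b ∂(P.map I),
          (P.map h) ((fun a : ℝ => (a, b)) ⁻¹' {p : ℝ×ℝ | u * (p.2 + σ2) * x ^ α < p.1})
          = ENNReal.ofReal (Real.exp (-(u*(b+σ2)*x^α))) := by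
        filter_upwards [aeI] with b hb0
        have hv : 0 ≤ u * (b + σ2) * x ^ α := by positivity
        have hpre2 : ((fun a : ℝ => (a, b)) ⁻¹' {p : ℝ×ℝ | u * (p.2 + σ2) * x ^ α < p.1})
            = Ioi (u * (b + σ2) * x ^ α) := rfl
        rw [hpre2, Measure.map_apply hh measurableSet_Ioi]
        exact hprob _ hv
      rw [lintegral_congr_ae hb]
      have hsplit : ∀ b : ℝ, Real.exp (-(u*(b+σ2)*x^α))
          = Real.exp (-(u*σ2*x^α)) * Real.exp (-((u*x^α)*b)) := by
        intro b
        rw [← Real.exp_add]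
        congr 1
        ring
      have hmw : Measurable fun b : ℝ => ENNReal.ofReal (Real.exp (-((u*x^α)*b))) := by
        apply Measurable.ennreal_ofReal
        exact (measurable_const.mul measurable_id).neg.exp
      calc ∫⁻ b, ENNReal.ofReal (Real.exp (-(u*(b+σ2)*x^α))) ∂(P.map I)
          = ∫⁻ b, ENNReal.ofReal (Real.exp (-(u*σ2*x^α)))
              * ENNReal.ofReal (Real.exp (-((u*x^α)*b))) ∂(P.map I) := by
            apply lintegral_congr
            intro b
            rw [hsplit b, ENNReal.ofReal_mul (Real.exp_pos _).le]
        _ = ENNReal.ofReal (Real.exp (-(u*σ2*x^α)))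
              * ∫⁻ b, ENNReal.ofReal (Real.exp (-((u*x^α)*b))) ∂(P.map I) :=
            lintegral_const_mul _ hmw
        _ = ENNReal.ofReal (Real.exp (-(u*σ2*x^α)))
              * ENNReal.ofReal (Real.exp (-(c*(u^(2/α)*x^2)))) := by
            congr 1
            rw [lintegral_map hmw hI]
            have hw : (0:ℝ) < u * x ^ α := by positivity
            have hint : Integrable (fun ω => Real.exp (-((u*x^α) * I ω))) P := by
              apply Integrable.mono' (integrable_const (1:ℝ))
              · apply Measurable.aestronglyMeasurable
                exact ((measurable_const.mul hI).neg).exp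
              · apply Filter.Eventually.of_forall
                intro ω
                rw [Real.norm_eq_abs, abs_of_nonneg (Real.exp_pos _).le, Real.exp_le_one_iff]
                have := hInn ω
                nlinarith
            rw [← ofReal_integral_eq_lintegral_ofReal hint
              (Filter.Eventually.of_forall fun ω => (Real.exp_pos _).le)]
            rw [hLap _ hw]
            congr 2
            rw [Real.mul_rpow hu.le (Real.rpow_nonneg hx.le α), ← Real.rpow_mul hx.le,
              show α * (2/α) = 2 by field_simp]
            rw [show (2:ℝ) = ((2:ℕ):ℝ) by norm_num, Real.rpow_natCast]
        _ = ENNReal.ofReal (Real.exp (-(u*σ2*x^α)) * Real.exp (-(c*(u^(2/α)*x^2)))) :=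
            (ENNReal.ofReal_mul (Real.exp_pos _).le).symm
    have step1 : ∫⁻ x, ((P.map h).prod (P.map I))
          ((fun p : ℝ×ℝ => (p, x)) ⁻¹' {q : (ℝ×ℝ)×ℝ | u * (q.1.2 + σ2) * q.2 ^ α < q.1.1})
          ∂(P.map R)
        = ∫⁻ x, ENNReal.ofReal (Real.exp (-(u*σ2*x^α)) * Real.exp (-(c*(u^(2/α)*x^2))))
          ∂(P.map R) :=
      lintegral_congr_ae (by filter_upwards [aeR] with x hx using hx_inner x hx)
    rw [step1]
    have hKmeas : Measurable fun x : ℝ =>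
        ENNReal.ofReal (Real.exp (-(u*σ2*x^α)) * Real.exp (-(c*(u^(2/α)*x^2)))) := by
      apply Measurable.ennreal_ofReal
      exact (((measurable_const.mul (measurable_id.pow_const α)).neg).exp).mul
        (((measurable_const.mul (measurable_const.mul (measurable_id.pow_const 2))).neg).exp)
    rw [hRdens, lintegral_withDensity_eq_lintegral_mul volume hdmeas hKmeas]
    have hcompl : ∫⁻ x in (Ioi (0:ℝ))ᶜ,
        ((fun x : ℝ => ENNReal.ofReal
            (if 0 < x then 2 * π * lam * x * Real.exp (-(π * lam * x ^ 2)) else 0)) *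
          fun x : ℝ => ENNReal.ofReal
            (Real.exp (-(u*σ2*x^α)) * Real.exp (-(c*(u^(2/α)*x^2))))) x ∂volume = 0 := by
      rw [compl_Ioi]
      have hz : ∀ᵐ x ∂volume, x ∈ Iic (0:ℝ) →
          ((fun x : ℝ => ENNReal.ofReal
              (if 0 < x then 2 * π * lam * x * Real.exp (-(π * lam * x ^ 2)) else 0)) *
            fun x : ℝ => ENNReal.ofReal
              (Real.exp (-(u*σ2*x^α)) * Real.exp (-(c*(u^(2/α)*x^2))))) x = 0 := by
        apply Filter.Eventually.of_forall
        intro x hx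
        have hx0 : x ≤ 0 := hx
        simp only [Pi.mul_apply, if_neg (not_lt.mpr hx0)]
        simp
      rw [setLIntegral_congr_fun_ae measurableSet_Iic hz]
      simp
    have hIoi : ∫⁻ x in Ioi (0:ℝ),
        ((fun x : ℝ => ENNReal.ofReal
            (if 0 < x then 2 * π * lam * x * Real.exp (-(π * lam * x ^ 2)) else 0)) *
          fun x : ℝ => ENNReal.ofReal
            (Real.exp (-(u*σ2*x^α)) * Real.exp (-(c*(u^(2/α)*x^2))))) x ∂volume
        = ∫⁻ x in Ioi (0:ℝ), ENNReal.ofReal ((2*π*lam*x*Real.exp (-(π*lam*x^2))) *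
            (Real.exp (-(u*σ2*x^α)) * Real.exp (-(c*(u^(2/α)*x^2))))) ∂volume := by
      apply setLIntegral_congr_fun_ae measurableSet_Ioi
      apply Filter.Eventually.of_forall
      intro x hx
      have hx0 : (0:ℝ) < x := hx
      simp only [Pi.mul_apply, if_pos hx0]
      rw [← ENNReal.ofReal_mul (by positivity)]
    have hφnn : 0 ≤ᵐ[volume.restrict (Ioi (0:ℝ))] fun x : ℝ =>
        (2*π*lam*x*Real.exp (-(π*lam*x^2))) *
          (Real.exp (-(u*σ2*x^α)) * Real.exp (-(c*(u^(2/α)*x^2)))) := by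
      filter_upwards [self_mem_ae_restrict measurableSet_Ioi] with x hx
      have hx0 : (0:ℝ) < x := hx
      positivity
    have hgnn : 0 ≤ᵐ[volume.restrict (Ioi (0:ℝ))] fun z : ℝ =>
        π * lam * Real.exp (-(u * σ2 * z ^ (α/2)) - c * u ^ (2/α) * z - π * lam * z) := by
      apply Filter.Eventually.of_forall
      intro z
      positivity
    calc ∫⁻ x, ((fun x : ℝ => ENNReal.ofReal
            (if 0 < x then 2 * π * lam * x * Real.exp (-(π * lam * x ^ 2)) else 0)) *
          fun x : ℝ => ENNReal.ofReal
            (Real.exp (-(u*σ2*x^α)) * Real.exp (-(c*(u^(2/α)*x^2))))) x ∂volume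
        = ∫⁻ x in Ioi (0:ℝ), ((fun x : ℝ => ENNReal.ofReal
            (if 0 < x then 2 * π * lam * x * Real.exp (-(π * lam * x ^ 2)) else 0)) *
          fun x : ℝ => ENNReal.ofReal
            (Real.exp (-(u*σ2*x^α)) * Real.exp (-(c*(u^(2/α)*x^2))))) x ∂volume
          + ∫⁻ x in (Ioi (0:ℝ))ᶜ, ((fun x : ℝ => ENNReal.ofReal
            (if 0 < x then 2 * π * lam * x * Real.exp (-(π * lam * x ^ 2)) else 0)) *
          fun x : ℝ => ENNReal.ofReal
            (Real.exp (-(u*σ2*x^α)) * Real.exp (-(c*(u^(2/α)*x^2))))) x ∂volume :=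
          (lintegral_add_compl _ measurableSet_Ioi).symm
      _ = ∫⁻ x in Ioi (0:ℝ), ENNReal.ofReal ((2*π*lam*x*Real.exp (-(π*lam*x^2))) *
            (Real.exp (-(u*σ2*x^α)) * Real.exp (-(c*(u^(2/α)*x^2))))) ∂volume := by
          rw [hcompl, hIoi, add_zero]
      _ = ENNReal.ofReal (∫ x in Ioi (0:ℝ), (2*π*lam*x*Real.exp (-(π*lam*x^2))) *
            (Real.exp (-(u*σ2*x^α)) * Real.exp (-(c*(u^(2/α)*x^2))))) :=
          (ofReal_integral_eq_lintegral_ofReal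
            (phiInt hc.le hα0.le hlam hσ hu.le) hφnn).symm
      _ = ENNReal.ofReal (∫ z in Ioi (0:ℝ),
            π * lam * Real.exp (-(u * σ2 * z ^ (α/2)) - c * u ^ (2/α) * z - π * lam * z)) := by
          rw [gSubst]
      _ = ∫⁻ z in Ioi (0:ℝ), ENNReal.ofReal
            (π * lam * Real.exp (-(u * σ2 * z ^ (α/2)) - c * u ^ (2/α) * z - π * lam * z)) :=
          ofReal_integral_eq_lintegral_ofReal
            (gInt hc.le hα0.le hlam hσ hu.le) hgnn
  -- a.e. positivity facts on Ω
  have aeh : ∀ᵐ ω ∂P, 0 < h ω := by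
    rw [ae_iff]
    convert nullh using 2
    ext ω; simp [not_lt]
  have aeRo : ∀ᵐ ω ∂P, 0 < R ω := by
    rw [ae_iff]
    convert nullR using 2
    ext ω; simp [not_lt]
  have aeden : ∀ᵐ ω ∂P, 0 < I ω + σ2 := by
    rw [ae_iff]
    convert nullden using 2
    ext ω; simp [not_lt]
  -- measurability of the integrand
  have minner : Measurable fun ω => 1 + h ω * R ω ^ (-α) / (I ω + σ2) :=
    measurable_const.add ((hh.mul (hR.pow_const (-α))).div (hI.add_const σ2))
  have mγ : Measurable fun ω => Real.logb 2 (1 + h ω * R ω ^ (-α) / (I ω + σ2)) := by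
    simp only [Real.logb]
    exact (Real.measurable_log.comp minner).div_const _
  have lognn : 0 ≤ᵐ[P] fun ω => Real.logb 2 (1 + h ω * R ω ^ (-α) / (I ω + σ2)) := by
    filter_upwards [aeh, aeRo, aeden] with ω h1 h2 h3
    have hγpos : 0 < h ω * R ω ^ (-α) / (I ω + σ2) :=
      div_pos (mul_pos h1 (Real.rpow_pos_of_pos h2 _)) h3
    exact Real.logb_nonneg one_lt_two (by linarith)
  -- the t-sections
  have hset : ∀ t : ℝ, t ∈ Ioi (0:ℝ) →
      P {a | t < Real.logb 2 (1 + h a * R a ^ (-α) / (I a + σ2))}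
      = ∫⁻ z in Ioi (0:ℝ), ENNReal.ofReal
        (π * lam * Real.exp (-(((2:ℝ)^t - 1) * σ2 * z ^ (α/2))
          - c * ((2:ℝ)^t - 1) ^ (2/α) * z - π * lam * z)) := by
    intro t ht
    have h2t : (1:ℝ) < (2:ℝ) ^ t := by
      have h0 : (2:ℝ) ^ (0:ℝ) < (2:ℝ) ^ t :=
        Real.rpow_lt_rpow_of_exponent_lt one_lt_two ht
      rwa [Real.rpow_zero] at h0
    have hut : 0 < (2:ℝ) ^ t - 1 := by linarith
    have hevq : {a | t < Real.logb 2 (1 + h a * R a ^ (-α) / (I a + σ2))}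
        =ᵐ[P] {ω | ((2:ℝ)^t - 1) * (I ω + σ2) * R ω ^ α < h ω} := by
      apply Filter.eventuallyEq_set.mpr
      filter_upwards [aeh, aeRo, aeden] with ω h1 h2 h3
      have hγpos : 0 < h ω * R ω ^ (-α) / (I ω + σ2) :=
        div_pos (mul_pos h1 (Real.rpow_pos_of_pos h2 _)) h3
      rw [Real.lt_logb_iff_rpow_lt one_lt_two (by linarith),
        show (1:ℝ) + h ω * R ω ^ (-α) / (I ω + σ2)
          = h ω * R ω ^ (-α) / (I ω + σ2) + 1 by ring,
        ← sub_lt_iff_lt_add, lt_div_iff₀ h3, Real.rpow_neg h2.le, ← div_eq_mul_inv,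
        lt_div_iff₀ (Real.rpow_pos_of_pos h2 α)]
    rw [measure_congr hevq]
    exact key _ hut
  -- measurability in t of the inner lintegral
  have m2t : Measurable fun t : ℝ => (2:ℝ) ^ t := by
    have e : (fun t : ℝ => (2:ℝ) ^ t) = fun t => Real.exp (Real.log 2 * t) := by
      funext t
      rw [Real.rpow_def_of_pos (by norm_num)]
    rw [e]
    exact (measurable_const.mul measurable_id).exp
  have hGlm : Measurable fun t : ℝ => ∫⁻ z in Ioi (0:ℝ), ENNReal.ofReal
      (π * lam * Real.exp (-(((2:ℝ)^t - 1) * σ2 * z ^ (α/2))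
        - c * ((2:ℝ)^t - 1) ^ (2/α) * z - π * lam * z)) := by
    apply Measurable.lintegral_prod_right'
      (f := fun p : ℝ × ℝ => ENNReal.ofReal
        (π * lam * Real.exp (-(((2:ℝ)^p.1 - 1) * σ2 * p.2 ^ (α/2))
          - c * ((2:ℝ)^p.1 - 1) ^ (2/α) * p.2 - π * lam * p.2)))
    apply Measurable.ennreal_ofReal
    apply Measurable.const_mul
    apply Measurable.exp
    have mA : Measurable fun p : ℝ × ℝ => (2:ℝ) ^ p.1 - 1 :=
      (m2t.comp measurable_fst).sub measurable_const
    exact (((mA.mul measurable_const).mul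
        ((measurable_snd.pow_const (α/2)))).neg.sub
        (((mA.pow_const (2/α)).const_mul c).mul measurable_snd)).sub
        (measurable_snd.const_mul (π*lam))
  -- value of the inner lintegral
  have hGlval : ∀ u : ℝ, 0 ≤ u → (∫⁻ z in Ioi (0:ℝ), ENNReal.ofReal
      (π * lam * Real.exp (-(u * σ2 * z ^ (α/2)) - c * u ^ (2/α) * z - π * lam * z)))
      = ENNReal.ofReal (∫ z in Ioi (0:ℝ),
        π * lam * Real.exp (-(u * σ2 * z ^ (α/2)) - c * u ^ (2/α) * z - π * lam * z)) := by
    intro u hu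
    refine (ofReal_integral_eq_lintegral_ofReal (gInt hc.le hα0.le hlam hσ hu) ?_).symm
    apply Filter.Eventually.of_forall
    intro z
    positivity
  -- rewrite the LHS
  rw [integral_eq_lintegral_of_nonneg_ae lognn mγ.aestronglyMeasurable,
    lintegral_eq_lintegral_meas_lt P lognn mγ.aemeasurable]
  rw [setLIntegral_congr_fun_ae measurableSet_Ioi (Filter.Eventually.of_forall hset)]
  -- rewrite the RHS
  have hFnn : 0 ≤ᵐ[volume.restrict (Ioi (0:ℝ))] fun t : ℝ => ∫ z in Ioi (0:ℝ),
      π * lam * Real.exp (-(((2:ℝ)^t - 1) * σ2 * z ^ (α/2))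
        - c * ((2:ℝ)^t - 1) ^ (2/α) * z - π * lam * z) := by
    apply Filter.Eventually.of_forall
    intro t
    apply integral_nonneg
    intro z
    positivity
  have hFae : (fun t : ℝ => (∫⁻ z in Ioi (0:ℝ), ENNReal.ofReal
        (π * lam * Real.exp (-(((2:ℝ)^t - 1) * σ2 * z ^ (α/2))
          - c * ((2:ℝ)^t - 1) ^ (2/α) * z - π * lam * z))).toReal)
      =ᵐ[volume.restrict (Ioi (0:ℝ))] fun t : ℝ => ∫ z in Ioi (0:ℝ),
        π * lam * Real.exp (-(((2:ℝ)^t - 1) * σ2 * z ^ (α/2))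
          - c * ((2:ℝ)^t - 1) ^ (2/α) * z - π * lam * z) := by
    filter_upwards [self_mem_ae_restrict measurableSet_Ioi] with t ht
    have h2t : (1:ℝ) < (2:ℝ) ^ t := by
      have h0 : (2:ℝ) ^ (0:ℝ) < (2:ℝ) ^ t :=
        Real.rpow_lt_rpow_of_exponent_lt one_lt_two ht
      rwa [Real.rpow_zero] at h0
    rw [hGlval _ (by linarith)]
    rw [ENNReal.toReal_ofReal]
    apply integral_nonneg
    intro z
    positivity
  have hFmeas : AEStronglyMeasurable (fun t : ℝ => ∫ z in Ioi (0:ℝ),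
      π * lam * Real.exp (-(((2:ℝ)^t - 1) * σ2 * z ^ (α/2))
        - c * ((2:ℝ)^t - 1) ^ (2/α) * z - π * lam * z))
      (volume.restrict (Ioi (0:ℝ))) :=
    (hGlm.ennreal_toReal.stronglyMeasurable.aestronglyMeasurable).congr hFae
  rw [integral_eq_lintegral_of_nonneg_ae hFnn hFmeas]
  congr 1
  apply setLIntegral_congr_fun_ae measurableSet_Ioi
  apply Filter.Eventually.of_forall
  intro t ht
  have h2t : (1:ℝ) < (2:ℝ) ^ t := by
    have h0 : (2:ℝ) ^ (0:ℝ) < (2:ℝ) ^ t :=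
      Real.rpow_lt_rpow_of_exponent_lt one_lt_two ht
    rwa [Real.rpow_zero] at h0
  rw [hGlval _ (by linarith)]
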